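/- Let d = (d_1,…,d_n) be a graphical degree sequence with n ≥ 1, and let k ≥ 0 be an integer such that every graph in G'(d) is within JS distance at most k of some element of G(d). Then the number of graphs in G'(d) is at most (k+1) · n^(3k) times the number of graphs in G(d). -/

import Mathlib

open SimpleGraph
open scoped symmDiff

/-- The degree of vertex `v` in graph `G`. -/
noncomputable def deg {n : ℕ} (G : SimpleGraph (Fin n)) (v : Fin n) : ℕ :=
  (G.neighborSet v).ncard

/-- `G ∈ 𝒢(d)`: vertex `i` has degree `d i` for every `i`. -/
def memG {n : ℕ} (d : Fin n → ℕ) (G : SimpleGraph (Fin n)) : Prop :=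
  ∀ v, deg G v = d v

/-- `G ∈ 𝒢'(d)`: the degree sequence of `G` is componentwise at most `d`,
with total deficit at most `2`. -/
def memG' {n : ℕ} (d : Fin n → ℕ) (G : SimpleGraph (Fin n)) : Prop :=
  (∀ v, deg G v ≤ d v) ∧ ∑ v, (d v - deg G v) ≤ 2

/-- A single (directed) move of the Jerrum–Sinclair chain from `G` to `H`:
Type 0 (delete an edge when `G ∈ 𝒢(d)`), Type 2 (add an edge between two
deficient vertices), or Type 1 (add an edge to a deficient vertex and delete
an edge at the other endpoint). -/
def jsStep {n : ℕ} (d : Fin n → ℕ) (G H : SimpleGraph (Fin n)) : Prop :=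
  (memG d G ∧ ∃ u v : Fin n, G.Adj u v ∧ H = G.deleteEdges {s(u, v)}) ∨
  (¬ memG d G ∧ ∃ i j : Fin n, i ≠ j ∧ ¬ G.Adj i j ∧ deg G i < d i ∧ deg G j < d j ∧
      H = G ⊔ fromEdgeSet {s(i, j)}) ∨
  (¬ memG d G ∧ ∃ i j k : Fin n, i ≠ j ∧ ¬ G.Adj i j ∧ deg G i < d i ∧ deg G j = d j ∧
      G.Adj j k ∧ H = (G ⊔ fromEdgeSet {s(i, j)}).deleteEdges {s(j, k)})

/-- `G` and `H` are JS adjacent. -/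
def jsAdj {n : ℕ} (d : Fin n → ℕ) (G H : SimpleGraph (Fin n)) : Prop :=
  jsStep d G H ∨ jsStep d H G

/-- There is a walk of exactly `m` JS-adjacent steps from `G` to `H`, all of
whose states lie in `𝒢'(d)`. -/
def jsChain {n : ℕ} (d : Fin n → ℕ) (m : ℕ) (G H : SimpleGraph (Fin n)) : Prop :=
  ∃ f : ℕ → SimpleGraph (Fin n), f 0 = G ∧ f m = H ∧
    (∀ i ≤ m, memG' d (f i)) ∧ (∀ i < m, jsAdj d (f i) (f (i+1)))

/-- The JS distance between `G` and `H` (within `𝒢'(d)`) is at most `k`. -/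
def jsDistLe {n : ℕ} (d : Fin n → ℕ) (k : ℕ) (G H : SimpleGraph (Fin n)) : Prop :=
  ∃ m ≤ k, jsChain d m G H

/-! ### Auxiliary machinery -/

/-- The graph with (at most) the two edges `s(p.1, p.2.1)` and `s(p.2.1, p.2.2)`. -/
def egraph {n : ℕ} (p : Fin n × Fin n × Fin n) : SimpleGraph (Fin n) :=
  fromEdgeSet {s(p.1, p.2.1), s(p.2.1, p.2.2)}

lemma loopy {n : ℕ} (u v : Fin n) :
    (fromEdgeSet {s(u,v), s(v,v)} : SimpleGraph (Fin n)) = fromEdgeSet {s(u,v)} := by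
  ext a b
  simp only [fromEdgeSet_adj, Set.mem_insert_iff, Set.mem_singleton_iff, Sym2.eq_iff]
  aesop

lemma disj_of_not_adj {n : ℕ} (G : SimpleGraph (Fin n)) (i j : Fin n) (h : ¬ G.Adj i j) :
    Disjoint G (fromEdgeSet {s(i,j)}) := by
  rw [disjoint_iff]
  ext a b
  simp only [inf_adj, fromEdgeSet_adj, Set.mem_singleton_iff, Sym2.eq_iff, bot_adj, iff_false]
  rintro ⟨hG, (⟨rfl, rfl⟩ | ⟨rfl, rfl⟩), _⟩
  · exact h hG
  · exact h hG.symm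

lemma le_of_adj {n : ℕ} (G : SimpleGraph (Fin n)) (j k : Fin n) (h : G.Adj j k) :
    fromEdgeSet {s(j,k)} ≤ G := by
  intro a b hab
  rw [fromEdgeSet_adj] at hab
  obtain ⟨he, _⟩ := hab
  rw [Set.mem_singleton_iff, Sym2.eq_iff] at he
  rcases he with ⟨rfl, rfl⟩ | ⟨rfl, rfl⟩
  · exact h
  · exact h.symm

lemma disj_singles {n : ℕ} (e f : Sym2 (Fin n)) (h : e ≠ f) :
    Disjoint (fromEdgeSet {e} : SimpleGraph (Fin n)) (fromEdgeSet {f}) := by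
  rw [disjoint_iff]
  ext a b
  simp only [inf_adj, fromEdgeSet_adj, Set.mem_singleton_iff, bot_adj, iff_false]
  rintro ⟨⟨rfl, _⟩, rfl, _⟩
  exact h rfl

/-- Every JS step is a symmetric difference with some `egraph p`. -/
lemma jsStep_symmDiff {n : ℕ} {d : Fin n → ℕ} {G H : SimpleGraph (Fin n)}
    (h : jsStep d G H) : ∃ p : Fin n × Fin n × Fin n, H = G ∆ egraph p := by
  rcases h with ⟨-, u, v, hadj, rfl⟩ | ⟨-, i, j, hij, hnadj, -, -, rfl⟩ |
    ⟨-, i, j, k, hij, hnadj, -, -, hadj, rfl⟩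
  · refine ⟨(u, v, v), ?_⟩
    rw [egraph, loopy, symmDiff_of_ge (le_of_adj G u v hadj), deleteEdges]
  · refine ⟨(i, j, j), ?_⟩
    rw [egraph, loopy, (disj_of_not_adj G i j hnadj).symmDiff_eq_sup]
  · refine ⟨(i, j, k), ?_⟩
    have hne : s(i,j) ≠ s(j,k) := by
      intro he
      rw [Sym2.eq_iff] at he
      rcases he with ⟨h', -⟩ | ⟨rfl, -⟩
      · exact hij h'
      · exact hnadj hadj.symm
    have h1 : Disjoint G (fromEdgeSet {s(i,j)}) := disj_of_not_adj G i j hnadj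
    have h2 : fromEdgeSet {s(j,k)} ≤ G := le_of_adj G j k hadj
    have h3 : Disjoint (fromEdgeSet {s(i,j)} : SimpleGraph (Fin n)) (fromEdgeSet {s(j,k)}) :=
      disj_singles _ _ hne
    have hsplit : (fromEdgeSet {s(i,j), s(j,k)} : SimpleGraph (Fin n)) =
        fromEdgeSet {s(i,j)} ⊔ fromEdgeSet {s(j,k)} := by
      rw [Set.insert_eq, fromEdgeSet_union]
    rw [egraph, hsplit, ← h3.symmDiff_eq_sup, symmDiff_comm (fromEdgeSet {s(i,j)}),
      ← symmDiff_assoc, symmDiff_of_ge h2, deleteEdges]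
    rw [sup_sdiff, h3.sdiff_eq_left, (h1.mono_left sdiff_le).symmDiff_eq_sup]

lemma jsAdj_symmDiff {n : ℕ} {d : Fin n → ℕ} {G H : SimpleGraph (Fin n)}
    (h : jsAdj d G H) : ∃ p : Fin n × Fin n × Fin n, H = G ∆ egraph p := by
  rcases h with h | h
  · exact jsStep_symmDiff h
  · obtain ⟨p, hp⟩ := jsStep_symmDiff h
    exact ⟨p, by rw [hp, symmDiff_symmDiff_cancel_right]⟩

/-- Reconstruction: starting from `H`, repeatedly take symmetric differences. -/
def recAux {n : ℕ} (t : ℕ → Fin n × Fin n × Fin n) (H : SimpleGraph (Fin n)) :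
    ℕ → SimpleGraph (Fin n)
  | 0 => H
  | j+1 => recAux t H j ∆ egraph (t j)

lemma recAux_congr {n : ℕ} {t t' : ℕ → Fin n × Fin n × Fin n} (H : SimpleGraph (Fin n))
    (m : ℕ) (h : ∀ j < m, t j = t' j) : recAux t H m = recAux t' H m := by
  induction m with
  | zero => rfl
  | succ m ih =>
    show recAux t H m ∆ egraph (t m) = recAux t' H m ∆ egraph (t' m)
    rw [ih (fun j hj => h j (by omega)), h m (by omega)]

/-- Any endpoint of a JS chain can be reconstructed from the other endpoint
and a sequence of vertex triples. -/
lemma chain_decode {n : ℕ} (hn : 1 ≤ n) (d : Fin n → ℕ) :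
    ∀ (m : ℕ) (G H : SimpleGraph (Fin n)), jsChain d m G H →
      ∃ t : ℕ → Fin n × Fin n × Fin n, G = recAux t H m := by
  intro m
  induction m with
  | zero =>
    rintro G H ⟨f, h0, hm, -, -⟩
    exact ⟨fun _ => (⟨0, hn⟩, ⟨0, hn⟩, ⟨0, hn⟩), by rw [← h0, ← hm]; rfl⟩
  | succ m ih =>
    rintro G H ⟨f, h0, hm, hmem, hadj⟩
    have hc : jsChain d m (f 1) H :=
      ⟨fun i => f (i+1), rfl, hm, fun i hi => hmem _ (by omega),
        fun i hi => hadj (i+1) (by omega)⟩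
    obtain ⟨t, ht⟩ := ih (f 1) H hc
    obtain ⟨p, hp⟩ := jsAdj_symmDiff (h := hadj 0 (Nat.succ_pos m))
    refine ⟨Function.update t m p, ?_⟩
    have heq : recAux (Function.update t m p) H m = recAux t H m :=
      recAux_congr H m (fun j hj => Function.update_of_ne (Nat.ne_of_lt hj) p t)
    show G = recAux (Function.update t m p) H m ∆ egraph (Function.update t m p m)
    rw [heq, Function.update_self, ← ht, hp, symmDiff_symmDiff_cancel_right, h0]

/-- Proposition: strong stability implies P-stability, quantitative form.
If every graph in `𝒢'(d)` is within JS distance at most `k` of some element of `𝒢(d)`,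
then `|𝒢'(d)| ≤ (k+1) · n^(3k) · |𝒢(d)|`. -/
theorem stmt0 {n : ℕ} (hn : 1 ≤ n) (d : Fin n → ℕ)
    (hdpos : ∀ v, 1 ≤ d v)
    (hgraphical : ∃ H : SimpleGraph (Fin n), memG d H)
    (k : ℕ)
    (hclose : ∀ G : SimpleGraph (Fin n), memG' d G →
      ∃ H : SimpleGraph (Fin n), memG d H ∧ jsDistLe d k G H) :
    {G : SimpleGraph (Fin n) | memG' d G}.ncard ≤
      (k + 1) * n ^ (3 * k) * {G : SimpleGraph (Fin n) | memG d G}.ncard := by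
  classical
  set S' : Set (SimpleGraph (Fin n)) := {G | memG' d G} with hS'
  set S : Set (SimpleGraph (Fin n)) := {G | memG d G} with hS
  let junk : Fin n × Fin n × Fin n := (⟨0, hn⟩, ⟨0, hn⟩, ⟨0, hn⟩)
  let T := Fin (k+1) × (Fin k → Fin n × Fin n × Fin n) × ↥S
  let ψ : T → SimpleGraph (Fin n) := fun x =>
    recAux (fun j => if h : j < k then x.2.1 ⟨j, h⟩ else junk) x.2.2.1 x.1.1
  -- `S'` is contained in the range of `ψ`
  have hsub : S' ⊆ Set.range ψ := by
    intro G hG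
    obtain ⟨H, hH, m, hmk, hchain⟩ := hclose G hG
    obtain ⟨t, ht⟩ := chain_decode hn d m G H hchain
    refine ⟨(⟨m, by omega⟩, fun i => t i.val, ⟨H, hH⟩), ?_⟩
    show recAux _ H m = G
    rw [ht]
    exact (recAux_congr H m (fun j hj => by simp [show j < k by omega])).symm
  have hfinT : Finite T := by infer_instance
  calc S'.ncard ≤ (Set.range ψ).ncard :=
        Set.ncard_le_ncard hsub (Set.toFinite _)
    _ = Nat.card (Set.range ψ) := (Nat.card_coe_set_eq _).symm
    _ ≤ Nat.card T :=
        Nat.card_le_card_of_surjective (Set.rangeFactorization ψ)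
          Set.rangeFactorization_surjective
    _ = (k + 1) * n ^ (3 * k) * S.ncard := by
        have h2 : Nat.card (Fin k → Fin n × Fin n × Fin n) = (n ^ 3) ^ k := by
          rw [Nat.card_fun]
          simp only [Nat.card_prod, Nat.card_eq_fintype_card, Fintype.card_prod, Fintype.card_fin]
          ring
        rw [Nat.card_prod, Nat.card_prod, h2, Nat.card_coe_set_eq,
          Nat.card_eq_fintype_card, Fintype.card_fin, pow_mul]
        ring
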